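/- Let 0 < r < R and let k ≥ 0 be an integer. There exist constants C > 0 and κ > 0 such that for every t ≥ 0 and every measurable function w : ℝ³ → ℝ⁴ with ∫_{ℝ³} ‖w(ξ)‖² dξ < ∞, one has (∫_{{r ≤ |ξ| ≤ R}} |ξ|^{2k} ‖exp(−t·J(|ξ|)) w(ξ)‖² dξ)^{1/2} ≤ C e^{−κ t} (∫_{ℝ³} ‖w(ξ)‖² dξ)^{1/2}, where ‖·‖ denotes the Euclidean norm on ℝ⁴. -/

import Mathlib

open MeasureTheory
open scoped NNReal ENNReal Matrix

open NormedSpace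

/-- The Fourier symbol of the linearized diffusion-approximation radiation
hydrodynamics system at frequency of modulus `s`. -/
noncomputable def J (s : ℝ) : Matrix (Fin 4) (Fin 4) ℝ :=
  !![0, s, 0, 0;
     -s, 3 * s ^ 2, -s, -s;
     0, s, s ^ 2 + 4, -1;
     0, 0, -4, s ^ 2 + 1]

/-- Hypocoercive Lyapunov quadratic form for `J`. -/
noncomputable def PF (s : ℝ) (v : Fin 4 → ℝ) : ℝ :=
  4*(1+s^2)^2*(v 0^2 + v 1^2) - 2*s^3*(v 0)*(v 1) + 20*(1+s^2)^2*(v 2)^2 + 5*(1+s^2)^2*(v 3)^2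

/-- The associated dissipation quadratic form `vᵀ(JᵀP+PJ)v`. -/
noncomputable def QF (s : ℝ) (v : Fin 4 → ℝ) : ℝ :=
  2*s^4*(v 0)^2 + (24*s^2+46*s^4+24*s^6)*(v 1)^2 + (160+360*s^2+240*s^4+40*s^6)*(v 2)^2
  + (10+30*s^2+30*s^4+10*s^6)*(v 3)^2
  - 6*s^5*(v 0)*(v 1) + 2*s^4*(v 0)*(v 2) + 2*s^4*(v 0)*(v 3)
  + (32*s+64*s^3+32*s^5)*(v 1)*(v 2) - (8*s+16*s^3+8*s^5)*(v 1)*(v 3)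
  - (80+160*s^2+80*s^4)*(v 2)*(v 3)

/-- Sum-of-squares certificate: the dissipation form dominates `s⁴‖v‖²`. -/
lemma QF_ge (s : ℝ) (v : Fin 4 → ℝ) :
    s^4*((v 0)^2+(v 1)^2+(v 2)^2+(v 3)^2) ≤ QF s v := by
  have hD : (0:ℝ) < 86016 + 516864*s^2 + 1264800*s^4 + 1623336*s^6 + 1173846*s^8
      + 477615*s^10 + 102135*s^12 + 9000*s^14 := by positivity
  rw [← sub_nonneg]
  have key : (86016 + 516864*s^2 + 1264800*s^4 + 1623336*s^6 + 1173846*s^8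
      + 477615*s^10 + 102135*s^12 + 9000*s^14)
      * (QF s v - s^4*((v 0)^2+(v 1)^2+(v 2)^2+(v 3)^2))
      = s^4*(86016 + 516864*s^2 + 1264800*s^4 + 1623336*s^6 + 1173846*s^8
          + 477615*s^10 + 102135*s^12 + 9000*s^14)*(v 0 - 3*s*(v 1) + v 2 + v 3)^2
      + (3584 + 14816*s^2 + 22680*s^4 + 15854*s^6 + 5009*s^8 + 600*s^10)
        * ((24*s+45*s^3+15*s^5)*(v 1) + (16+32*s^2+19*s^4)*(v 2) - (4+8*s^2+s^4)*(v 3))^2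
      + ((3584 + 14816*s^2 + 22680*s^4 + 15854*s^6 + 5009*s^8 + 600*s^10)*(v 2)
          - (896 + 3464*s^2 + 4836*s^4 + 2861*s^6 + 596*s^8)*(v 3))^2
      + (1075200*s^2 + 8327808*s^4 + 28049712*s^6 + 53777244*s^8 + 64442898*s^10
          + 49825623*s^12 + 24716220*s^14 + 7536105*s^16 + 1272750*s^18 + 90000*s^20)*(v 3)^2 := by
    unfold QF; ring
  have hrhs : 0 ≤ (86016 + 516864*s^2 + 1264800*s^4 + 1623336*s^6 + 1173846*s^8
      + 477615*s^10 + 102135*s^12 + 9000*s^14)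
      * (QF s v - s^4*((v 0)^2+(v 1)^2+(v 2)^2+(v 3)^2)) := by
    rw [key]; positivity
  exact nonneg_of_mul_nonneg_right hrhs hD

lemma PF_lower (s : ℝ) (hs : 0 ≤ s) (v : Fin 4 → ℝ) :
    (7/2) * ((v 0)^2+(v 1)^2+(v 2)^2+(v 3)^2) ≤ PF s v := by
  unfold PF
  nlinarith [sq_nonneg (s*(s-1)), sq_nonneg (v 0 - v 1), sq_nonneg (v 0 + v 1),
    sq_nonneg s, sq_nonneg (v 2), sq_nonneg (v 3), sq_nonneg (s^2),
    mul_nonneg (mul_nonneg hs hs) hs, sq_nonneg (s^2*(v 0 - v 1)), sq_nonneg (s^2*(v 0 + v 1)),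
    mul_nonneg (mul_nonneg (mul_nonneg hs hs) hs) (sq_nonneg (v 0 - v 1)),
    mul_nonneg (mul_nonneg (mul_nonneg hs hs) hs) (sq_nonneg (v 0 + v 1))]

lemma PF_upper (s R : ℝ) (hs : 0 ≤ s) (hsR : s ≤ R) (v : Fin 4 → ℝ) :
    PF s v ≤ 21*(1+R^2)^2 * ((v 0)^2+(v 1)^2+(v 2)^2+(v 3)^2) := by
  have h1 : (1+s^2)^2 ≤ (1+R^2)^2 := by
    nlinarith [sq_nonneg s, sq_nonneg R, mul_le_mul hsR hsR hs (le_trans hs hsR)]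
  have h2 : 2*s^3*(v 0)*(v 1) ≥ -((1+s^2)^2*((v 0)^2+(v 1)^2)/2) := by
    nlinarith [sq_nonneg (s*(s-1)), sq_nonneg (v 0 - v 1), sq_nonneg (v 0 + v 1),
      mul_nonneg (mul_nonneg (mul_nonneg hs hs) hs) (sq_nonneg (v 0 + v 1)),
      mul_nonneg (mul_nonneg (mul_nonneg hs hs) hs) (sq_nonneg (v 0 - v 1))]
  unfold PF
  nlinarith [sq_nonneg (v 0), sq_nonneg (v 1), sq_nonneg (v 2), sq_nonneg (v 3), sq_nonneg (1+s^2)]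

lemma hasDerivAt_coord (A : Matrix (Fin 4) (Fin 4) ℝ) (v : Fin 4 → ℝ) (t : ℝ) (i : Fin 4) :
    HasDerivAt (fun τ : ℝ => (exp (τ • A) *ᵥ v) i)
      ((A *ᵥ (exp (t • A) *ᵥ v)) i) t := by
  letI : SeminormedRing (Matrix (Fin 4) (Fin 4) ℝ) := Matrix.linftyOpSemiNormedRing
  letI : NormedRing (Matrix (Fin 4) (Fin 4) ℝ) := Matrix.linftyOpNormedRing
  letI : NormedAlgebra ℝ (Matrix (Fin 4) (Fin 4) ℝ) := Matrix.linftyOpNormedAlgebra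
  have hexp : HasDerivAt (fun τ : ℝ => exp (τ • A)) (A * exp (t • A)) t :=
    hasDerivAt_exp_smul_const' A t
  let φ : Matrix (Fin 4) (Fin 4) ℝ →ₗ[ℝ] ℝ :=
    { toFun := fun M => (M *ᵥ v) i
      map_add' := fun M N => by simp [Matrix.add_mulVec]
      map_smul' := fun c M => by simp [Matrix.smul_mulVec] }
  have h := (φ.toContinuousLinearMap.hasFDerivAt
    (x := exp (t • A))).comp_hasDerivAt t hexp
  simp only [LinearMap.coe_toContinuousLinearMap', Function.comp] at h
  have heq : φ (A * exp (t • A)) = (A *ᵥ (exp (t • A) *ᵥ v)) i := by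
    simp [φ, ← Matrix.mulVec_mulVec]
  rw [← heq]
  exact h

lemma mulVec_negJ (s : ℝ) (x : Fin 4 → ℝ) :
    (-(J s)) *ᵥ x = ![-(s * x 1), s * x 0 - 3*s^2*x 1 + s*x 2 + s*x 3,
      -(s*x 1) - (s^2+4)*x 2 + x 3, 4*x 2 - (s^2+1)*x 3] := by
  funext i
  fin_cases i <;>
    simp [J, Matrix.mulVec, dotProduct, Fin.sum_univ_four] <;> ring

lemma hasDerivAt_PF_exp (s : ℝ) (v : Fin 4 → ℝ) (t : ℝ) :
    HasDerivAt (fun τ : ℝ => PF s (exp (τ • (-(J s))) *ᵥ v))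
      (-(QF s (exp (t • (-(J s))) *ᵥ v))) t := by
  set A := -(J s) with hA
  set u : Fin 4 → ℝ := exp (t • A) *ᵥ v with hu
  have h0 := hasDerivAt_coord A v t 0
  have h1 := hasDerivAt_coord A v t 1
  have h2 := hasDerivAt_coord A v t 2
  have h3 := hasDerivAt_coord A v t 3
  have hD :
      HasDerivAt (fun τ : ℝ => PF s (exp (τ • A) *ᵥ v))
        (4*(1+s^2)^2*(2*u 0*(A *ᵥ u) 0 + 2*u 1*(A *ᵥ u) 1)
          - 2*s^3*((A *ᵥ u) 0 * u 1 + u 0 * (A *ᵥ u) 1)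
          + 20*(1+s^2)^2*(2*u 2*(A *ᵥ u) 2) + 5*(1+s^2)^2*(2*u 3*(A *ᵥ u) 3)) t := by
    unfold PF
    have e0 := h0.mul h0
    have e1 := h1.mul h1
    have e2 := h2.mul h2
    have e3 := h3.mul h3
    have e01 := h0.mul h1
    have := ((((e0.add e1).const_mul (4*(1+s^2)^2)).sub (e01.const_mul (2*s^3))).add
      (e2.const_mul (20*(1+s^2)^2))).add (e3.const_mul (5*(1+s^2)^2))
    convert this using 2 <;> (try rfl) <;> (try simp only [Pi.mul_apply, Pi.add_apply, Pi.sub_apply]) <;> ring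
  convert hD using 1
  rw [mulVec_negJ]
  unfold QF
  simp only [Matrix.cons_val_zero, Matrix.cons_val_one, Matrix.head_cons,
    Matrix.cons_val_two, Matrix.tail_cons, Matrix.cons_val_three]
  ring

lemma pointwise_decay (r R : ℝ) (hr : 0 < r) (s : ℝ) (hs : r ≤ s) (hsR : s ≤ R)
    (t : ℝ) (ht : 0 ≤ t) (v : Fin 4 → ℝ) :
    ((exp (t • (-(J s))) *ᵥ v) 0)^2 + ((exp (t • (-(J s))) *ᵥ v) 1)^2
      + ((exp (t • (-(J s))) *ᵥ v) 2)^2 + ((exp (t • (-(J s))) *ᵥ v) 3)^2 ≤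
    6*(1+R^2)^2 * Real.exp (-(r^4/(21*(1+R^2)^2)) * t)
      * ((v 0)^2+(v 1)^2+(v 2)^2+(v 3)^2) := by
  have hs0 : 0 ≤ s := le_trans hr.le hs
  set κ2 : ℝ := r^4/(21*(1+R^2)^2) with hκ2
  have hβ : (0:ℝ) < 21*(1+R^2)^2 := by positivity
  have hκ2pos : 0 < κ2 := by positivity
  set A := -(J s) with hA
  set u : ℝ → Fin 4 → ℝ := fun τ => exp (τ • A) *ᵥ v with hu
  set E : ℝ → ℝ := fun τ => PF s (u τ) with hE
  set F : ℝ → ℝ := fun τ => E τ * Real.exp (κ2 * τ) with hF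
  have hFd : ∀ τ : ℝ, HasDerivAt F
      ((-(QF s (u τ))) * Real.exp (κ2 * τ) + E τ * (κ2 * Real.exp (κ2 * τ))) τ := by
    intro τ
    have hexp : HasDerivAt (fun τ : ℝ => Real.exp (κ2 * τ)) (κ2 * Real.exp (κ2 * τ)) τ := by
      simpa [mul_comm] using ((hasDerivAt_id τ).const_mul κ2).exp
    exact (hasDerivAt_PF_exp s v τ).mul hexp
  have hderiv_nonpos : ∀ τ : ℝ, 0 ≤ τ →
      (-(QF s (u τ))) * Real.exp (κ2 * τ) + E τ * (κ2 * Real.exp (κ2 * τ)) ≤ 0 := by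
    intro τ _
    have hQ : κ2 * E τ ≤ QF s (u τ) := by
      have h1 := QF_ge s (u τ)
      have h2 := PF_upper s R hs0 hsR (u τ)
      have hr4 : r^4 ≤ s^4 := by
        have := pow_le_pow_left₀ hr.le hs 4
        linarith
      have hsq : 0 ≤ (u τ 0)^2+(u τ 1)^2+(u τ 2)^2+(u τ 3)^2 := by positivity
      have : κ2 * E τ ≤ κ2 * (21*(1+R^2)^2 * ((u τ 0)^2+(u τ 1)^2+(u τ 2)^2+(u τ 3)^2)) :=
        mul_le_mul_of_nonneg_left h2 hκ2pos.le
      calc κ2 * E τ ≤ κ2 * (21*(1+R^2)^2 * ((u τ 0)^2+(u τ 1)^2+(u τ 2)^2+(u τ 3)^2)) := this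
        _ = r^4 * ((u τ 0)^2+(u τ 1)^2+(u τ 2)^2+(u τ 3)^2) := by
            rw [hκ2, ← mul_assoc, div_mul_cancel₀ _ hβ.ne']
        _ ≤ s^4 * ((u τ 0)^2+(u τ 1)^2+(u τ 2)^2+(u τ 3)^2) :=
            mul_le_mul_of_nonneg_right hr4 hsq
        _ ≤ QF s (u τ) := h1
    have hexp : (0:ℝ) < Real.exp (κ2 * τ) := Real.exp_pos _
    nlinarith
  have hF_antitone : AntitoneOn F (Set.Ici 0) := by
    apply antitoneOn_of_deriv_nonpos (convex_Ici 0)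
    · exact fun τ _ => ((hFd τ).differentiableAt.continuousAt).continuousWithinAt
    · exact fun τ _ => (hFd τ).differentiableAt.differentiableWithinAt
    · intro τ hτ
      rw [(hFd τ).deriv]
      exact hderiv_nonpos τ (le_of_lt (by simpa using hτ))
  have hFt : F t ≤ F 0 := hF_antitone (Set.self_mem_Ici) (Set.mem_Ici.mpr ht) ht
  have hu0 : u 0 = v := by
    simp [hu, Matrix.one_mulVec]
  have hE0 : E 0 = PF s v := by rw [hE]; simp [hu0]
  have hEt : E t ≤ PF s v * Real.exp (-(κ2 * t)) := by
    have h := hFt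
    rw [hF] at h
    simp only [mul_zero, Real.exp_zero, mul_one, hE0] at h
    have hexp : (0:ℝ) < Real.exp (κ2 * t) := Real.exp_pos _
    rw [Real.exp_neg, ← div_eq_mul_inv]
    exact (le_div_iff₀ hexp).mpr h
  have hlow := PF_lower s hs0 (u t)
  have hup := PF_upper s R hs0 hsR v
  have hexp : (0:ℝ) < Real.exp (-(κ2 * t)) := Real.exp_pos _
  have : PF s v * Real.exp (-(κ2 * t)) ≤
      21*(1+R^2)^2 * ((v 0)^2+(v 1)^2+(v 2)^2+(v 3)^2) * Real.exp (-(κ2 * t)) :=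
    mul_le_mul_of_nonneg_right hup hexp.le
  have hfinal : (7/2) * ((u t 0)^2+(u t 1)^2+(u t 2)^2+(u t 3)^2) ≤
      21*(1+R^2)^2 * ((v 0)^2+(v 1)^2+(v 2)^2+(v 3)^2) * Real.exp (-(κ2 * t)) :=
    le_trans hlow (le_trans hEt this)
  have hrw : -κ2 * t = -(κ2 * t) := by ring
  rw [hrw]
  nlinarith [hfinal]

/-- For `0 < r < R` and `k ≥ 0` there are `C, κ > 0` such that for every `t ≥ 0` and every
square-integrable measurable `w : ℝ³ → ℝ⁴`,
`(∫_{r≤|ξ|≤R} |ξ|^{2k} ‖exp(−t J(|ξ|)) w(ξ)‖² dξ)^{1/2} ≤ C e^{−κt} (∫ ‖w(ξ)‖² dξ)^{1/2}`. -/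
theorem medium_frequency_semigroup_decay (r R : ℝ) (hr : 0 < r) (hrR : r < R) (k : ℕ) :
    ∃ C κ : ℝ, 0 < C ∧ 0 < κ ∧ ∀ t : ℝ, 0 ≤ t →
      ∀ w : EuclideanSpace ℝ (Fin 3) → EuclideanSpace ℝ (Fin 4), Measurable w →
      (∫⁻ ξ, (‖w ξ‖₊ : ℝ≥0∞) ^ 2) < ⊤ →
      (∫⁻ ξ in {ξ : EuclideanSpace ℝ (Fin 3) | r ≤ ‖ξ‖ ∧ ‖ξ‖ ≤ R},
          (‖ξ‖₊ : ℝ≥0∞) ^ (2 * k) *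
            (‖(EuclideanSpace.equiv (Fin 4) ℝ).symm
                (NormedSpace.exp (-(t • J ‖ξ‖)) *ᵥ
                  EuclideanSpace.equiv (Fin 4) ℝ (w ξ))‖₊ : ℝ≥0∞) ^ 2) ^ (1 / 2 : ℝ) ≤
        ENNReal.ofReal (C * Real.exp (-κ * t)) *
          (∫⁻ ξ, (‖w ξ‖₊ : ℝ≥0∞) ^ 2) ^ (1 / 2 : ℝ) := by
  classical
  set β : ℝ := 21*(1+R^2)^2 with hβdef
  set C : ℝ := Real.sqrt 6 * (1+R^2) * (max 1 R)^k with hC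
  set κ : ℝ := r^4/(42*(1+R^2)^2) with hκ
  have hCpos : 0 < C := by
    have h6 : (0:ℝ) < Real.sqrt 6 := Real.sqrt_pos.mpr (by norm_num)
    have : (0:ℝ) < (max 1 R)^k := pow_pos (lt_of_lt_of_le one_pos (le_max_left 1 R)) k
    positivity
  have hκpos : 0 < κ := by positivity
  refine ⟨C, κ, hCpos, hκpos, ?_⟩
  intro t ht w hw _
  set A : Set (EuclideanSpace ℝ (Fin 3)) := {ξ | r ≤ ‖ξ‖ ∧ ‖ξ‖ ≤ R} with hAdef
  have hAmeas : MeasurableSet A := by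
    have : A = (fun ξ : EuclideanSpace ℝ (Fin 3) => ‖ξ‖) ⁻¹' (Set.Icc r R) := rfl
    rw [this]
    exact measurable_norm measurableSet_Icc
  -- the pointwise bound
  have hpoint : ∀ ξ ∈ A,
      (‖ξ‖₊ : ℝ≥0∞) ^ (2 * k) *
        (‖(EuclideanSpace.equiv (Fin 4) ℝ).symm
            (NormedSpace.exp (-(t • J ‖ξ‖)) *ᵥ
              EuclideanSpace.equiv (Fin 4) ℝ (w ξ))‖₊ : ℝ≥0∞) ^ 2 ≤
      ENNReal.ofReal ((C * Real.exp (-κ * t))^2) * (‖w ξ‖₊ : ℝ≥0∞) ^ 2 := by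
    intro ξ hξ
    obtain ⟨hξr, hξR⟩ := hξ
    set s : ℝ := ‖ξ‖ with hsdef
    set v : Fin 4 → ℝ := EuclideanSpace.equiv (Fin 4) ℝ (w ξ) with hv
    set y : EuclideanSpace ℝ (Fin 4) :=
      (EuclideanSpace.equiv (Fin 4) ℝ).symm (NormedSpace.exp (-(t • J s)) *ᵥ v) with hy
    have hyc : ∀ i, y i = (NormedSpace.exp (-(t • J s)) *ᵥ v) i := fun i => rfl
    have hvc : ∀ i, v i = w ξ i := fun i => rfl
    have hnegsmul : -(t • J s) = t • (-(J s)) := by rw [smul_neg]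
    have hysq : ‖y‖^2 = (y 0)^2 + (y 1)^2 + (y 2)^2 + (y 3)^2 := by
      rw [EuclideanSpace.norm_eq, Real.sq_sqrt (by positivity)]
      simp [Fin.sum_univ_four, Real.norm_eq_abs, sq_abs]
    have hwsq : ‖w ξ‖^2 = (v 0)^2 + (v 1)^2 + (v 2)^2 + (v 3)^2 := by
      rw [EuclideanSpace.norm_eq, Real.sq_sqrt (by positivity)]
      simp [Fin.sum_univ_four, Real.norm_eq_abs, sq_abs, hvc]
    have hdecay : ‖y‖^2 ≤ 6*(1+R^2)^2 * Real.exp (-(r^4/(21*(1+R^2)^2)) * t) * ‖w ξ‖^2 := by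
      rw [hysq, hwsq]
      have := pointwise_decay r R hr s hξr hξR t ht v
      simp only [hyc, hnegsmul]
      exact this
    -- real-valued bound including the frequency weight
    have hfreq : s^(2*k) ≤ (max 1 R)^(2*k) := by
      apply pow_le_pow_left₀ (norm_nonneg ξ)
      exact le_trans hξR (le_max_right 1 R)
    have hreal : s^(2*k) * ‖y‖^2 ≤ (C * Real.exp (-κ * t))^2 * ‖w ξ‖^2 := by
      have hCe : (C * Real.exp (-κ * t))^2
          = (max 1 R)^(2*k) * (6*(1+R^2)^2 * Real.exp (-(r^4/(21*(1+R^2)^2)) * t)) := by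
        have h6 : Real.sqrt 6 ^ 2 = 6 := Real.sq_sqrt (by norm_num)
        have hexp2 : Real.exp (-κ * t) ^ 2 = Real.exp (-(r^4/(21*(1+R^2)^2)) * t) := by
          rw [← Real.exp_nat_mul]
          congr 1
          rw [hκ]
          field_simp
          ring
        rw [hC]
        rw [mul_pow, mul_pow, hexp2, mul_pow, h6, ← pow_mul]
        ring
      have hysqnn : 0 ≤ ‖y‖^2 := by positivity
      have h1 : s^(2*k) * ‖y‖^2 ≤ (max 1 R)^(2*k) * ‖y‖^2 :=
        mul_le_mul_of_nonneg_right hfreq hysqnn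
      have h2 : (max 1 R)^(2*k) * ‖y‖^2
          ≤ (max 1 R)^(2*k) * (6*(1+R^2)^2 * Real.exp (-(r^4/(21*(1+R^2)^2)) * t) * ‖w ξ‖^2) := by
        apply mul_le_mul_of_nonneg_left hdecay
        positivity
      rw [hCe]
      calc s^(2*k) * ‖y‖^2 ≤ (max 1 R)^(2*k) * ‖y‖^2 := h1
        _ ≤ (max 1 R)^(2*k) * (6*(1+R^2)^2 * Real.exp (-(r^4/(21*(1+R^2)^2)) * t) * ‖w ξ‖^2) := h2
        _ = (max 1 R)^(2*k) * (6*(1+R^2)^2 * Real.exp (-(r^4/(21*(1+R^2)^2)) * t)) * ‖w ξ‖^2 := by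
            ring
    -- transfer to ℝ≥0∞
    have e1 : (‖ξ‖₊ : ℝ≥0∞) ^ (2*k) = ENNReal.ofReal (s^(2*k)) := by
      rw [ENNReal.ofReal_pow (norm_nonneg ξ)]
      congr 1
      exact (ofReal_norm ξ).symm
    have e2 : (‖y‖₊ : ℝ≥0∞) ^ 2 = ENNReal.ofReal (‖y‖^2) := by
      rw [ENNReal.ofReal_pow (norm_nonneg y)]
      congr 1
      exact (ofReal_norm y).symm
    have e3 : (‖w ξ‖₊ : ℝ≥0∞) ^ 2 = ENNReal.ofReal (‖w ξ‖^2) := by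
      rw [ENNReal.ofReal_pow (norm_nonneg (w ξ))]
      congr 1
      exact (ofReal_norm (w ξ)).symm
    rw [e1, e2, e3, ← ENNReal.ofReal_mul (by positivity), ← ENNReal.ofReal_mul (by positivity)]
    exact ENNReal.ofReal_le_ofReal hreal
  -- integrate the pointwise bound
  have hint : (∫⁻ ξ in A,
      (‖ξ‖₊ : ℝ≥0∞) ^ (2 * k) *
        (‖(EuclideanSpace.equiv (Fin 4) ℝ).symm
            (NormedSpace.exp (-(t • J ‖ξ‖)) *ᵥ
              EuclideanSpace.equiv (Fin 4) ℝ (w ξ))‖₊ : ℝ≥0∞) ^ 2)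
      ≤ ENNReal.ofReal ((C * Real.exp (-κ * t))^2) * ∫⁻ ξ, (‖w ξ‖₊ : ℝ≥0∞) ^ 2 := by
    have hmono : (∫⁻ ξ in A,
        (‖ξ‖₊ : ℝ≥0∞) ^ (2 * k) *
          (‖(EuclideanSpace.equiv (Fin 4) ℝ).symm
              (NormedSpace.exp (-(t • J ‖ξ‖)) *ᵥ
                EuclideanSpace.equiv (Fin 4) ℝ (w ξ))‖₊ : ℝ≥0∞) ^ 2)
        ≤ ∫⁻ ξ in A, ENNReal.ofReal ((C * Real.exp (-κ * t))^2) * (‖w ξ‖₊ : ℝ≥0∞) ^ 2 := by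
      apply lintegral_mono_ae
      rw [ae_restrict_iff' hAmeas]
      exact Filter.Eventually.of_forall hpoint
    refine le_trans hmono ?_
    rw [lintegral_const_mul' _ _ ENNReal.ofReal_ne_top]
    apply mul_le_mul_right
    exact setLIntegral_le_lintegral A _
  -- take square roots
  have hrpow := ENNReal.rpow_le_rpow hint (by norm_num : (0:ℝ) ≤ 1/2)
  refine le_trans hrpow ?_
  rw [ENNReal.mul_rpow_of_nonneg _ _ (by norm_num : (0:ℝ) ≤ 1/2)]
  apply mul_le_mul_left
  have hc0 : 0 ≤ C * Real.exp (-κ * t) := by positivity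
  rw [ENNReal.ofReal_pow hc0]
  rw [← ENNReal.rpow_natCast (ENNReal.ofReal (C * Real.exp (-κ * t))) 2,
    ← ENNReal.rpow_mul]
  norm_num
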